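/- arXiv:2002.12770 — 5 statements merged into one kernel-verified Lean document; each statement's English description precedes it below -/
import Mathlib

section
/- Let c ≥ 0 and n̄ > 0, and let a, a' ∈ [0,∞)^N satisfy a_n ≤ a'_n for all n. If n̄ Σ_{n=1}^{N} (1 − (1+a_n)^{-2}) ≥ c², then F_c(a) ≤ F_c(a'). In other words, F_c is coordinatewise nondecreasing on the (upward-closed) region {a ∈ [0,∞)^N : n̄ Σ_n (1 − (1+a_n)^{-2}) ≥ c²}. -/
noncomputable section

/-- `F_c(a) = n̄ Σ_n ln(1+a_n) − c √(n̄ Σ_n (1 − (1+a_n)⁻²))`. -/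
def Ffun {N : ℕ} (nbar c : ℝ) (a : Fin N → ℝ) : ℝ :=
  nbar * ∑ n, Real.log (1 + a n) -
    c * Real.sqrt (nbar * ∑ n, (1 - ((1 + a n) ^ 2)⁻¹))

/-- Key pointwise inequality: for `1 ≤ x ≤ y`, `x⁻² − y⁻² ≤ 2 (ln y − ln x)`. -/
lemma key_ineq {x y : ℝ} (hx : 1 ≤ x) (hxy : x ≤ y) :
    (x ^ 2)⁻¹ - (y ^ 2)⁻¹ ≤ 2 * (Real.log y - Real.log x) := by
  have hx0 : 0 < x := lt_of_lt_of_le one_pos hx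
  have hy0 : 0 < y := lt_of_lt_of_le hx0 hxy
  have hlog : 1 - x / y ≤ Real.log y - Real.log x := by
    have h := Real.log_le_sub_one_of_pos (div_pos hx0 hy0)
    rw [Real.log_div hx0.ne' hy0.ne'] at h
    linarith
  have h2 : (x ^ 2)⁻¹ - (y ^ 2)⁻¹ ≤ 2 * (1 - x / y) := by
    have e : 2 * (1 - x / y) - ((x ^ 2)⁻¹ - (y ^ 2)⁻¹)
        = ((y - x) * (2 * x ^ 2 * y - (x + y))) / (x ^ 2 * y ^ 2) := by
      field_simp
      ring
    have hnum : 0 ≤ (y - x) * (2 * x ^ 2 * y - (x + y)) := by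
      have hx2 : 1 ≤ x ^ 2 := by nlinarith
      have : y ≤ x ^ 2 * y := le_mul_of_one_le_left hy0.le hx2
      apply mul_nonneg (by linarith)
      nlinarith
    have : 0 ≤ ((y - x) * (2 * x ^ 2 * y - (x + y))) / (x ^ 2 * y ^ 2) :=
      div_nonneg hnum (by positivity)
    linarith [e ▸ this]
  linarith

/-- Let `c ≥ 0`, `n̄ > 0`, and `0 ≤ a ≤ a'` pointwise. If
`n̄ Σ_n (1 − (1+a_n)⁻²) ≥ c²`, then `F_c(a) ≤ F_c(a')`: `F_c` is coordinatewise
nondecreasing on the upward-closed region where the dispersion sum is at least `c²`. -/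
theorem Ffun_mono_of_dispersion_ge
    {N : ℕ} (nbar c : ℝ) (hnbar : 0 < nbar) (hc : 0 ≤ c)
    (a a' : Fin N → ℝ) (ha0 : ∀ n, 0 ≤ a n) (hle : ∀ n, a n ≤ a' n)
    (hdisp : c ^ 2 ≤ nbar * ∑ n, (1 - ((1 + a n) ^ 2)⁻¹)) :
    Ffun nbar c a ≤ Ffun nbar c a' := by
  have hx1 : ∀ n, (1:ℝ) ≤ 1 + a n := fun n => by linarith [ha0 n]
  have hy1 : ∀ n, (1:ℝ) ≤ 1 + a' n := fun n => by linarith [ha0 n, hle n]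
  set X : ℝ := nbar * ∑ n, (1 - ((1 + a n) ^ 2)⁻¹) with hXdef
  set Y : ℝ := nbar * ∑ n, (1 - ((1 + a' n) ^ 2)⁻¹) with hYdef
  have hterm : ∀ n, (1:ℝ) - ((1 + a n) ^ 2)⁻¹ ≤ 1 - ((1 + a' n) ^ 2)⁻¹ := by
    intro n
    have h1 : (1 + a n) ^ 2 ≤ (1 + a' n) ^ 2 := by nlinarith [ha0 n, hle n]
    have := inv_anti₀ (show (0:ℝ) < (1 + a n) ^ 2 by nlinarith [ha0 n]) h1
    linarith
  have hXY : X ≤ Y := by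
    apply mul_le_mul_of_nonneg_left _ hnbar.le
    exact Finset.sum_le_sum fun n _ => hterm n
  have hX0 : 0 ≤ X := le_trans (sq_nonneg c) hdisp
  have hY0 : 0 ≤ Y := le_trans hX0 hXY
  -- step 1: c*√Y - c*√X ≤ (Y - X)/2
  have hcX : c ≤ Real.sqrt X := (Real.le_sqrt hc hX0).mpr hdisp
  have hsX : Real.sqrt X ^ 2 = X := Real.sq_sqrt hX0
  have hsY : Real.sqrt Y ^ 2 = Y := Real.sq_sqrt hY0
  have hsXY : Real.sqrt X ≤ Real.sqrt Y := Real.sqrt_le_sqrt hXY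
  have step1 : c * Real.sqrt Y - c * Real.sqrt X ≤ (Y - X) / 2 := by
    nlinarith [sq_nonneg (Real.sqrt X - Real.sqrt Y)]
  -- step 2: (Y - X)/2 ≤ nbar * (∑ log' - ∑ log)
  have hsum : ∑ n, (((1 + a n) ^ 2)⁻¹ - ((1 + a' n) ^ 2)⁻¹)
      ≤ ∑ n, 2 * (Real.log (1 + a' n) - Real.log (1 + a n)) :=
    Finset.sum_le_sum fun n _ => key_ineq (hx1 n) (by linarith [hle n])
  have hdiff : Y - X = nbar * ∑ n, (((1 + a n) ^ 2)⁻¹ - ((1 + a' n) ^ 2)⁻¹) := by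
    rw [hXdef, hYdef, ← mul_sub, ← Finset.sum_sub_distrib]
    congr 1
    apply Finset.sum_congr rfl
    intro n _
    ring
  have step2 : (Y - X) / 2 ≤
      nbar * (∑ n, Real.log (1 + a' n)) - nbar * (∑ n, Real.log (1 + a n)) := by
    rw [hdiff, ← mul_sub, ← Finset.sum_sub_distrib]
    have := mul_le_mul_of_nonneg_left hsum hnbar.le
    have h2 : ∑ n, 2 * (Real.log (1 + a' n) - Real.log (1 + a n))
        = 2 * ∑ n, (Real.log (1 + a' n) - Real.log (1 + a n)) :=
      (Finset.mul_sum _ _ _).symm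
    rw [h2] at this
    linarith
  show nbar * (∑ n, Real.log (1 + a n)) - c * Real.sqrt X ≤
      nbar * (∑ n, Real.log (1 + a' n)) - c * Real.sqrt Y
  linarith

end
end

section
/- The function Φ(a) := √(Σ_{n=1}^{N} (1 − (1+a_n)^{-2})) is concave on [0,∞)^N; that is, for all a, a' ∈ [0,∞)^N and all t ∈ [0,1], Φ(t·a + (1−t)·a') ≥ t·Φ(a) + (1−t)·Φ(a'). -/
noncomputable section

/-- `Φ(a) = √(Σ_n (1 − (1+a_n)⁻²))`, the square root of the sum of the per-symbol
channel dispersions. -/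
def Phi {N : ℕ} (a : Fin N → ℝ) : ℝ :=
  Real.sqrt (∑ n, (1 - ((1 + a n) ^ 2)⁻¹))

lemma sum_nonneg_aux {N : ℕ} (a : Fin N → ℝ) (ha : ∀ n, 0 ≤ a n) :
    0 ≤ ∑ n, (1 - ((1 + a n) ^ 2)⁻¹) := by
  apply Finset.sum_nonneg
  intro n _
  have h1 : (1:ℝ) ≤ 1 + a n := by linarith [ha n]
  have h2 : (1:ℝ) ≤ (1 + a n) ^ 2 := by nlinarith
  have : ((1 + a n) ^ 2)⁻¹ ≤ 1 := inv_le_one_of_one_le₀ h2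
  linarith

/-- `Φ` is concave on `[0,∞)^N`: for all `a, a' ∈ [0,∞)^N` and
`t ∈ [0,1]`, `Φ(t·a + (1−t)·a') ≥ t·Φ(a) + (1−t)·Φ(a')`. -/
theorem Phi_concave_on_nonneg
    {N : ℕ} (hN : 0 < N)
    (a a' : Fin N → ℝ) (ha : ∀ n, 0 ≤ a n) (ha' : ∀ n, 0 ≤ a' n)
    (t : ℝ) (ht0 : 0 ≤ t) (ht1 : t ≤ 1) :
    t * Phi a + (1 - t) * Phi a' ≤ Phi (fun n => t * a n + (1 - t) * a' n) := by
  set S := ∑ n, (1 - ((1 + a n) ^ 2)⁻¹) with hS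
  set S' := ∑ n, (1 - ((1 + a' n) ^ 2)⁻¹) with hS'
  set Sm := ∑ n, (1 - ((1 + (t * a n + (1 - t) * a' n)) ^ 2)⁻¹) with hSm
  have hSnn : 0 ≤ S := sum_nonneg_aux a ha
  have hS'nn : 0 ≤ S' := sum_nonneg_aux a' ha'
  -- convexity of x ↦ x^(-2) gives per-coordinate concavity of dispersions
  have hsum : t * S + (1 - t) * S' ≤ Sm := by
    rw [hS, hS', hSm, Finset.mul_sum, Finset.mul_sum, ← Finset.sum_add_distrib]
    apply Finset.sum_le_sum
    intro n _
    have hx : (1 + a n) ∈ Set.Ioi (0:ℝ) := by simp; linarith [ha n]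
    have hy : (1 + a' n) ∈ Set.Ioi (0:ℝ) := by simp; linarith [ha' n]
    have := (convexOn_zpow (𝕜 := ℝ) (-2)).2 hx hy ht0 (show (0:ℝ) ≤ 1 - t by linarith) (show t + (1 - t) = 1 by ring)
    simp only [smul_eq_mul] at this
    have heq : t * (1 + a n) + (1 - t) * (1 + a' n)
        = 1 + (t * a n + (1 - t) * a' n) := by ring
    rw [heq] at this
    have h2 : ∀ x : ℝ, x ^ (-2 : ℤ) = (x ^ 2)⁻¹ := by
      intro x; rw [zpow_neg, zpow_two]; norm_num [sq]
    rw [h2, h2, h2] at this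
    linarith [this]
  -- sqrt is monotone and concave
  have hmono : Real.sqrt (t * S + (1 - t) * S') ≤ Real.sqrt Sm :=
    Real.sqrt_le_sqrt hsum
  have hconc := Real.strictConcaveOn_sqrt.concaveOn.2
    (Set.mem_Ici.mpr hSnn) (Set.mem_Ici.mpr hS'nn) ht0 (show (0:ℝ) ≤ 1 - t by linarith) (show t + (1 - t) = 1 by ring)
  simp only [smul_eq_mul] at hconc
  calc t * Phi a + (1 - t) * Phi a'
      ≤ Real.sqrt (t * S + (1 - t) * S') := by
        simpa [Phi, hS, hS'] using hconc
    _ ≤ Real.sqrt Sm := hmono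
    _ = Phi (fun n => t * a n + (1 - t) * a' n) := by simp [Phi, hSm]
end
end

section
/- For every c ≥ 0 and n̄ > 0, the function E_c(b) := n̄ Σ_{n=1}^{N} ln(1+b_n) + c √(n̄ Σ_{n=1}^{N} (1 − (1+b_n)^{-2})) is concave on [0,∞)^N; that is, for all b, b' ∈ [0,∞)^N and all t ∈ [0,1], E_c(t·b + (1−t)·b') ≥ t·E_c(b) + (1−t)·E_c(b'). -/
noncomputable section

private lemma log_ineq {u v t : ℝ} (hu : 0 < u) (hv : 0 < v) (ht0 : 0 ≤ t) (ht1 : t ≤ 1) :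
    t * Real.log u + (1 - t) * Real.log v ≤ Real.log (t * u + (1 - t) * v) := by
  have := strictConcaveOn_log_Ioi.concaveOn.2 (Set.mem_Ioi.2 hu) (Set.mem_Ioi.2 hv)
    ht0 (sub_nonneg.2 ht1) (by ring)
  simpa [smul_eq_mul] using this

private lemma inv_ineq {u v t : ℝ} (hu : 1 ≤ u) (hv : 1 ≤ v) (ht0 : 0 ≤ t) (ht1 : t ≤ 1) :
    ((t * u + (1 - t) * v) ^ 2)⁻¹ ≤ t * (u ^ 2)⁻¹ + (1 - t) * (v ^ 2)⁻¹ := by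
  have h := (convexOn_zpow (𝕜 := ℝ) (-2)).2 (Set.mem_Ioi.2 (lt_of_lt_of_le one_pos hu))
    (Set.mem_Ioi.2 (lt_of_lt_of_le one_pos hv)) ht0 (sub_nonneg.2 ht1) (by ring)
  have e : ∀ x : ℝ, x ^ (-2 : ℤ) = (x ^ 2)⁻¹ := fun x => by
    rw [zpow_neg]; norm_cast
  simpa [smul_eq_mul, e] using h

private lemma sqrt_concave {a b t : ℝ} (ha : 0 ≤ a) (hb : 0 ≤ b) (ht0 : 0 ≤ t) (ht1 : t ≤ 1) :
    t * Real.sqrt a + (1 - t) * Real.sqrt b ≤ Real.sqrt (t * a + (1 - t) * b) := by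
  have := Real.strictConcaveOn_sqrt.concaveOn.2 (Set.mem_Ici.2 ha) (Set.mem_Ici.2 hb)
    ht0 (sub_nonneg.2 ht1) (by ring)
  simpa [smul_eq_mul] using this


/-- `E_c(b) = n̄ Σ_n ln(1+b_n) + c √(n̄ Σ_n (1 − (1+b_n)⁻²))`. -/
def Efun {N : ℕ} (nbar c : ℝ) (b : Fin N → ℝ) : ℝ :=
  nbar * ∑ n, Real.log (1 + b n) +
    c * Real.sqrt (nbar * ∑ n, (1 - ((1 + b n) ^ 2)⁻¹))

/-- For every `c ≥ 0` and `n̄ > 0`, `E_c` is concave on `[0,∞)^N`: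
for all `b, b' ∈ [0,∞)^N` and `t ∈ [0,1]`,
`E_c(t·b + (1−t)·b') ≥ t·E_c(b) + (1−t)·E_c(b')`. -/
theorem Efun_concave_on_nonneg
    {N : ℕ} (nbar c : ℝ) (hnbar : 0 < nbar) (hc : 0 ≤ c)
    (b b' : Fin N → ℝ) (hb : ∀ n, 0 ≤ b n) (hb' : ∀ n, 0 ≤ b' n)
    (t : ℝ) (ht0 : 0 ≤ t) (ht1 : t ≤ 1) :
    t * Efun nbar c b + (1 - t) * Efun nbar c b' ≤
      Efun nbar c (fun n => t * b n + (1 - t) * b' n) := by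
  unfold Efun
  set g : ℝ → ℝ := fun x => 1 - ((1 + x) ^ 2)⁻¹ with hg
  -- notation
  have h1u : ∀ n, (0:ℝ) < 1 + b n := fun n => by have := hb n; linarith
  have h1v : ∀ n, (0:ℝ) < 1 + b' n := fun n => by have := hb' n; linarith
  -- log part
  have hlog : t * ∑ n, Real.log (1 + b n) + (1 - t) * ∑ n, Real.log (1 + b' n) ≤
      ∑ n, Real.log (1 + (t * b n + (1 - t) * b' n)) := by
    rw [Finset.mul_sum, Finset.mul_sum, ← Finset.sum_add_distrib]
    refine Finset.sum_le_sum fun n _ => ?_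
    have := log_ineq (h1u n) (h1v n) ht0 ht1
    calc t * Real.log (1 + b n) + (1 - t) * Real.log (1 + b' n)
        ≤ Real.log (t * (1 + b n) + (1 - t) * (1 + b' n)) := this
      _ = Real.log (1 + (t * b n + (1 - t) * b' n)) := by ring_nf
  -- g-sum part
  have hgsum : t * ∑ n, (1 - ((1 + b n) ^ 2)⁻¹) + (1 - t) * ∑ n, (1 - ((1 + b' n) ^ 2)⁻¹) ≤
      ∑ n, (1 - ((1 + (t * b n + (1 - t) * b' n)) ^ 2)⁻¹) := by
    rw [Finset.mul_sum, Finset.mul_sum, ← Finset.sum_add_distrib]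
    refine Finset.sum_le_sum fun n _ => ?_
    have h := inv_ineq (u := 1 + b n) (v := 1 + b' n)
      (by have := hb n; linarith) (by have := hb' n; linarith) ht0 ht1
    have e : t * (1 + b n) + (1 - t) * (1 + b' n) = 1 + (t * b n + (1 - t) * b' n) := by ring
    rw [e] at h
    nlinarith [h]
  -- nonnegativity of each sum
  have hterm : ∀ (f : Fin N → ℝ), (∀ n, (0:ℝ) ≤ f n) →
      (0:ℝ) ≤ ∑ n, (1 - ((1 + f n) ^ 2)⁻¹) := by
    intro f hf
    refine Finset.sum_nonneg fun n _ => ?_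
    have h1 : (1:ℝ) ≤ (1 + f n) ^ 2 := by nlinarith [hf n]
    have : ((1 + f n) ^ 2)⁻¹ ≤ 1 := by
      rw [inv_le_one_iff₀]; right; exact h1
    linarith
  have hS1 : (0:ℝ) ≤ ∑ n, (1 - ((1 + b n) ^ 2)⁻¹) := hterm b hb
  have hS2 : (0:ℝ) ≤ ∑ n, (1 - ((1 + b' n) ^ 2)⁻¹) := hterm b' hb'
  -- sqrt part
  have hsq : t * Real.sqrt (nbar * ∑ n, (1 - ((1 + b n) ^ 2)⁻¹)) +
      (1 - t) * Real.sqrt (nbar * ∑ n, (1 - ((1 + b' n) ^ 2)⁻¹)) ≤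
      Real.sqrt (nbar * ∑ n, (1 - ((1 + (t * b n + (1 - t) * b' n)) ^ 2)⁻¹)) := by
    have step1 := sqrt_concave (mul_nonneg hnbar.le hS1) (mul_nonneg hnbar.le hS2) ht0 ht1
    refine step1.trans (Real.sqrt_le_sqrt ?_)
    have := mul_le_mul_of_nonneg_left hgsum hnbar.le
    nlinarith [this]
  -- combine
  have hlog' := mul_le_mul_of_nonneg_left hlog hnbar.le
  have hsq' := mul_le_mul_of_nonneg_left hsq hc
  nlinarith [hlog', hsq']


end
end

section
/- Let c ≥ 0, n̄ > 0, and let b⁰ ∈ [0,∞)^N satisfy Σ_{n=1}^{N} (1 − (1+b⁰_n)^{-2}) > 0. Then for every b ∈ [0,∞)^N, the first-order Taylor expansion of E_c at b⁰ is a global overestimator: E_c(b) ≤ E_c(b⁰) + Σ_{m=1}^{N} [ n̄/(1+b⁰_m) + c·n̄·(1+b⁰_m)^{-3} / √(n̄ Σ_{n=1}^{N} (1 − (1+b⁰_n)^{-2})) ] · (b_m − b⁰_m). Consequently, if a real number τ is at least this linearization at b, then τ ≥ E_c(b). -/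
noncomputable section

lemma log_tangent {x y : ℝ} (hx : 0 < x) (hy : 0 < y) :
    Real.log y ≤ Real.log x + (y - x) / x := by
  have h := Real.log_le_sub_one_of_pos (x := y / x) (by positivity)
  rw [Real.log_div (ne_of_gt hy) (ne_of_gt hx)] at h
  rw [sub_div, div_self (ne_of_gt hx)]
  linarith

lemma inv_sq_tangent {u v : ℝ} (hu : 0 < u) (hv : 0 < v) :
    (v ^ 2)⁻¹ - (u ^ 2)⁻¹ ≤ 2 * (v ^ 3)⁻¹ * (u - v) := by
  have key : 2 * (v ^ 3)⁻¹ * (u - v) - ((v ^ 2)⁻¹ - (u ^ 2)⁻¹)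
      = (u - v) ^ 2 * (2 * u + v) / (u ^ 2 * v ^ 3) := by
    field_simp
    ring
  nlinarith [div_nonneg (mul_nonneg (sq_nonneg (u - v)) (by linarith : (0:ℝ) ≤ 2 * u + v))
    (le_of_lt (by positivity : (0:ℝ) < u ^ 2 * v ^ 3))]

lemma sqrt_tangent {x x0 : ℝ} (hx : 0 ≤ x) (hx0 : 0 < x0) :
    Real.sqrt x ≤ Real.sqrt x0 + (x - x0) / (2 * Real.sqrt x0) := by
  have h0 : 0 < Real.sqrt x0 := Real.sqrt_pos.mpr hx0
  have hxs : Real.sqrt x ^ 2 = x := Real.sq_sqrt hx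
  have hx0s : Real.sqrt x0 ^ 2 = x0 := Real.sq_sqrt hx0.le
  rw [← sub_le_iff_le_add', le_div_iff₀ (by positivity)]
  nlinarith [sq_nonneg (Real.sqrt x - Real.sqrt x0)]

/-- The first-order Taylor expansion of `E_c` at a point
`b⁰ ∈ [0,∞)^N` with strictly positive dispersion sum is a global overestimator of
`E_c` on `[0,∞)^N`; consequently any `τ` dominating the linearization dominates `E_c(b)`.
The coefficients are the partial derivatives `∂E_c/∂b_m` at `b⁰`. -/
theorem Efun_taylor_overestimates
    {N : ℕ} (nbar c : ℝ) (hnbar : 0 < nbar) (hc : 0 ≤ c)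
    (b0 : Fin N → ℝ) (hb0 : ∀ n, 0 ≤ b0 n)
    (hpos : 0 < ∑ n, (1 - ((1 + b0 n) ^ 2)⁻¹)) :
    ∀ b : Fin N → ℝ, (∀ n, 0 ≤ b n) →
      (Efun nbar c b ≤ Efun nbar c b0 +
        ∑ m, (nbar / (1 + b0 m) +
            c * nbar * ((1 + b0 m) ^ 3)⁻¹ /
              Real.sqrt (nbar * ∑ n, (1 - ((1 + b0 n) ^ 2)⁻¹))) * (b m - b0 m)) ∧
      (∀ τ : ℝ,
        Efun nbar c b0 +
          ∑ m, (nbar / (1 + b0 m) +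
              c * nbar * ((1 + b0 m) ^ 3)⁻¹ /
                Real.sqrt (nbar * ∑ n, (1 - ((1 + b0 n) ^ 2)⁻¹))) * (b m - b0 m) ≤ τ →
        Efun nbar c b ≤ τ) := by
  intro b hb
  have h1b0 : ∀ n, (0:ℝ) < 1 + b0 n := fun n => by linarith [hb0 n]
  have h1b : ∀ n, (0:ℝ) < 1 + b n := fun n => by linarith [hb n]
  set S0 : ℝ := ∑ n, (1 - ((1 + b0 n) ^ 2)⁻¹) with hS0def
  set Sb : ℝ := ∑ n, (1 - ((1 + b n) ^ 2)⁻¹) with hSbdef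
  have hSb : 0 ≤ Sb := Finset.sum_nonneg fun n _ => by
    have h1 : (1:ℝ) ≤ (1 + b n) ^ 2 := by nlinarith [hb n]
    have : ((1 + b n) ^ 2)⁻¹ ≤ 1 := inv_le_one_of_one_le₀ h1
    linarith
  have hx0 : 0 < nbar * S0 := mul_pos hnbar hpos
  have hsq : 0 < Real.sqrt (nbar * S0) := Real.sqrt_pos.mpr hx0
  -- pointwise bounds
  have hlog : ∀ n, Real.log (1 + b n) ≤ Real.log (1 + b0 n) + (b n - b0 n) / (1 + b0 n) := by
    intro n
    have := log_tangent (h1b0 n) (h1b n)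
    simpa using this
  have hconc : ∀ n, (1 - ((1 + b n) ^ 2)⁻¹) - (1 - ((1 + b0 n) ^ 2)⁻¹) ≤
      2 * ((1 + b0 n) ^ 3)⁻¹ * (b n - b0 n) := by
    intro n
    have h := inv_sq_tangent (h1b n) (h1b0 n)
    have he : (1 + b n) - (1 + b0 n) = b n - b0 n := by ring
    rw [he] at h
    linarith
  -- part 1
  have part1 : nbar * ∑ n, Real.log (1 + b n) ≤
      nbar * ∑ n, Real.log (1 + b0 n) + ∑ m, (nbar / (1 + b0 m)) * (b m - b0 m) := by
    have hsum : ∑ n, Real.log (1 + b n) ≤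
        ∑ n, (Real.log (1 + b0 n) + (b n - b0 n) / (1 + b0 n)) :=
      Finset.sum_le_sum fun n _ => hlog n
    rw [Finset.sum_add_distrib] at hsum
    have : ∑ m, (nbar / (1 + b0 m)) * (b m - b0 m)
        = nbar * ∑ n, (b n - b0 n) / (1 + b0 n) := by
      rw [Finset.mul_sum]
      exact Finset.sum_congr rfl fun m _ => by
        rw [div_eq_mul_inv, div_eq_mul_inv]; ring
    rw [this]
    nlinarith [hsum]
  -- part 2
  have hSdiff : Sb - S0 ≤ ∑ m, 2 * ((1 + b0 m) ^ 3)⁻¹ * (b m - b0 m) := by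
    rw [hSbdef, hS0def, ← Finset.sum_sub_distrib]
    exact Finset.sum_le_sum fun n _ => hconc n
  have hsqrtb : Real.sqrt (nbar * Sb) ≤
      Real.sqrt (nbar * S0) + (nbar * Sb - nbar * S0) / (2 * Real.sqrt (nbar * S0)) :=
    sqrt_tangent (by positivity) hx0
  have hstep : (nbar * Sb - nbar * S0) / (2 * Real.sqrt (nbar * S0)) ≤
      ∑ m, nbar * ((1 + b0 m) ^ 3)⁻¹ / Real.sqrt (nbar * S0) * (b m - b0 m) := by
    have h2 : (nbar * Sb - nbar * S0) / (2 * Real.sqrt (nbar * S0))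
        = nbar / (2 * Real.sqrt (nbar * S0)) * (Sb - S0) := by
      rw [div_eq_mul_inv, div_eq_mul_inv]; ring
    have h3 : ∑ m, nbar * ((1 + b0 m) ^ 3)⁻¹ / Real.sqrt (nbar * S0) * (b m - b0 m)
        = nbar / (2 * Real.sqrt (nbar * S0)) *
          ∑ m, 2 * ((1 + b0 m) ^ 3)⁻¹ * (b m - b0 m) := by
      conv_rhs => rw [Finset.mul_sum]
      refine Finset.sum_congr rfl fun m _ => ?_
      rw [div_eq_mul_inv, div_eq_mul_inv]; ring
    rw [h2, h3]
    exact mul_le_mul_of_nonneg_left hSdiff (by positivity)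
  have part2 : c * Real.sqrt (nbar * Sb) ≤
      c * Real.sqrt (nbar * S0) +
        ∑ m, (c * nbar * ((1 + b0 m) ^ 3)⁻¹ / Real.sqrt (nbar * S0)) * (b m - b0 m) := by
    have h4 : Real.sqrt (nbar * Sb) ≤ Real.sqrt (nbar * S0) +
        ∑ m, nbar * ((1 + b0 m) ^ 3)⁻¹ / Real.sqrt (nbar * S0) * (b m - b0 m) :=
      hsqrtb.trans (by linarith)
    have h5 := mul_le_mul_of_nonneg_left h4 hc
    have h6 : c * (Real.sqrt (nbar * S0) +
        ∑ m, nbar * ((1 + b0 m) ^ 3)⁻¹ / Real.sqrt (nbar * S0) * (b m - b0 m))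
        = c * Real.sqrt (nbar * S0) +
          ∑ m, (c * nbar * ((1 + b0 m) ^ 3)⁻¹ / Real.sqrt (nbar * S0)) * (b m - b0 m) := by
      rw [mul_add]
      congr 1
      rw [Finset.mul_sum]
      exact Finset.sum_congr rfl fun m _ => by ring
    linarith
  have key : Efun nbar c b ≤ Efun nbar c b0 +
      ∑ m, (nbar / (1 + b0 m) +
          c * nbar * ((1 + b0 m) ^ 3)⁻¹ / Real.sqrt (nbar * S0)) * (b m - b0 m) := by
    have hsplit : ∑ m, (nbar / (1 + b0 m) +
          c * nbar * ((1 + b0 m) ^ 3)⁻¹ / Real.sqrt (nbar * S0)) * (b m - b0 m)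
        = ∑ m, (nbar / (1 + b0 m)) * (b m - b0 m) +
          ∑ m, (c * nbar * ((1 + b0 m) ^ 3)⁻¹ / Real.sqrt (nbar * S0)) * (b m - b0 m) := by
      rw [← Finset.sum_add_distrib]
      exact Finset.sum_congr rfl fun m _ => by ring
    rw [Efun, Efun, hsplit, ← hSbdef, ← hS0def]
    linarith
  exact ⟨key, fun τ h => key.trans h⟩

end
end

section
/- Let n̄ > 0 and let a⁰ ∈ [0,∞)^N satisfy Σ_{n=1}^{N} (1 − (1+a⁰_n)^{-2}) > 0. Then for every a ∈ [0,∞)^N, the function Ψ(a) := √(n̄ Σ_{n=1}^{N} (1 − (1+a_n)^{-2})) satisfies the tangent-overestimation inequality Ψ(a) ≤ Ψ(a⁰) + Σ_{m=1}^{N} [ n̄·(1+a⁰_m)^{-3} / Ψ(a⁰) ] · (a_m − a⁰_m). Consequently, for any reals R, τ, B: if R − (the right-hand-side linearization evaluated at a) − τ ≥ B, then R − Ψ(a) − τ ≥ B. -/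
noncomputable section

/-- `Ψ(a) = √(n̄ Σ_n (1 − (1+a_n)⁻²))`, the dispersion penalty term appearing in the
finite-blocklength secrecy rate. -/
def Psi {N : ℕ} (nbar : ℝ) (a : Fin N → ℝ) : ℝ :=
  Real.sqrt (nbar * ∑ n, (1 - ((1 + a n) ^ 2)⁻¹))

lemma sqrt_tangent_s8 {t s : ℝ} (ht : 0 ≤ t) (hs : 0 < s) :
    Real.sqrt t ≤ Real.sqrt s + (t - s) / (2 * Real.sqrt s) := by
  have hss : 0 < Real.sqrt s := Real.sqrt_pos.2 hs
  have h1 : Real.sqrt t ^ 2 = t := Real.sq_sqrt ht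
  have h2 : Real.sqrt s ^ 2 = s := Real.sq_sqrt hs.le
  have h3 : Real.sqrt t - Real.sqrt s ≤ (t - s) / (2 * Real.sqrt s) := by
    rw [le_div_iff₀ (by positivity)]
    nlinarith [sq_nonneg (Real.sqrt t - Real.sqrt s)]
  linarith

lemma pointwise_concave {x y : ℝ} (hx : 0 ≤ x) (hy : 0 ≤ y) :
    1 - ((1 + x) ^ 2)⁻¹ ≤ 1 - ((1 + y) ^ 2)⁻¹ + 2 * ((1 + y) ^ 3)⁻¹ * (x - y) := by
  have hu : (0:ℝ) < 1 + x := by linarith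
  have hv : (0:ℝ) < 1 + y := by linarith
  have h1 : ((1 + y) ^ 2)⁻¹ - ((1 + x) ^ 2)⁻¹ ≤ 2 * ((1 + y) ^ 3)⁻¹ * (x - y) := by
    rw [inv_eq_one_div, inv_eq_one_div, inv_eq_one_div]
    rw [div_sub_div _ _ (by positivity) (by positivity), mul_comm (2:ℝ), mul_assoc,
      div_mul_eq_mul_div, div_le_div_iff₀ (by positivity) (by positivity)]
    ring_nf
    nlinarith [sq_nonneg (x - y), mul_nonneg (sq_nonneg (x-y)) hu.le,
      mul_nonneg (mul_nonneg (sq_nonneg (x-y)) (by linarith : (0:ℝ) ≤ 2*(1+x)+(1+y)))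
        (by positivity : (0:ℝ) ≤ (1+x)^2*(1+y)^2)]
  linarith

lemma term_nonneg {x : ℝ} (hx : 0 ≤ x) : 0 ≤ 1 - ((1 + x) ^ 2)⁻¹ := by
  have h : ((1 + x) ^ 2)⁻¹ ≤ 1 := by
    rw [inv_le_one_iff₀]
    right
    nlinarith
  linarith

/-- The first-order Taylor expansion of `Ψ` at a point `a⁰ ∈ [0,∞)^N`
with strictly positive dispersion sum is a global overestimator of `Ψ` on `[0,∞)^N`;
consequently, replacing `Ψ(a)` by its linearization in the constraint
`R − Ψ(a) − τ ≥ B` yields a sufficient condition. The coefficients are the partial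
derivatives `∂Ψ/∂a_m` at `a⁰`. -/
theorem Psi_taylor_overestimates
    {N : ℕ} (nbar : ℝ) (hnbar : 0 < nbar)
    (a0 : Fin N → ℝ) (ha0 : ∀ n, 0 ≤ a0 n)
    (hpos : 0 < ∑ n, (1 - ((1 + a0 n) ^ 2)⁻¹)) :
    ∀ a : Fin N → ℝ, (∀ n, 0 ≤ a n) →
      (Psi nbar a ≤ Psi nbar a0 +
        ∑ m, (nbar * ((1 + a0 m) ^ 3)⁻¹ / Psi nbar a0) * (a m - a0 m)) ∧
      (∀ R τ B : ℝ,
        B ≤ R - (Psi nbar a0 +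
            ∑ m, (nbar * ((1 + a0 m) ^ 3)⁻¹ / Psi nbar a0) * (a m - a0 m)) - τ →
        B ≤ R - Psi nbar a - τ) := by
  intro a ha
  set S0 : ℝ := ∑ n, (1 - ((1 + a0 n) ^ 2)⁻¹) with hS0def
  set S : ℝ := ∑ n, (1 - ((1 + a n) ^ 2)⁻¹) with hSdef
  have hSnn : 0 ≤ S := Finset.sum_nonneg fun n _ => term_nonneg (ha n)
  have hΨ0 : Psi nbar a0 = Real.sqrt (nbar * S0) := rfl
  have hΨ0pos : 0 < Psi nbar a0 := by
    rw [hΨ0]; exact Real.sqrt_pos.2 (mul_pos hnbar hpos)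
  -- Step A: sqrt tangent bound
  have stepA : Psi nbar a ≤ Psi nbar a0 + (nbar * S - nbar * S0) / (2 * Psi nbar a0) := by
    have := sqrt_tangent_s8 (t := nbar * S) (s := nbar * S0)
      (mul_nonneg hnbar.le hSnn) (mul_pos hnbar hpos)
    simpa [Psi, hS0def, hSdef] using this
  -- Step B: coordinatewise concavity
  have stepB : S ≤ S0 + ∑ m, 2 * ((1 + a0 m) ^ 3)⁻¹ * (a m - a0 m) := by
    rw [hSdef, hS0def, ← Finset.sum_add_distrib]
    exact Finset.sum_le_sum fun m _ => pointwise_concave (ha m) (ha0 m)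
  -- rewrite the linear term
  have hsum : ∑ m, (nbar * ((1 + a0 m) ^ 3)⁻¹ / Psi nbar a0) * (a m - a0 m)
      = nbar / (2 * Psi nbar a0) * ∑ m, 2 * ((1 + a0 m) ^ 3)⁻¹ * (a m - a0 m) := by
    rw [Finset.mul_sum]
    refine Finset.sum_congr rfl fun m _ => ?_
    rw [div_eq_mul_inv, div_eq_mul_inv, mul_inv]
    ring
  have main : Psi nbar a ≤ Psi nbar a0 +
      ∑ m, (nbar * ((1 + a0 m) ^ 3)⁻¹ / Psi nbar a0) * (a m - a0 m) := by
    rw [hsum, div_mul_eq_mul_div]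
    refine stepA.trans ((add_le_add_iff_left _).mpr ?_)
    gcongr
    nlinarith [stepB]
  exact ⟨main, fun R τ B h => by linarith⟩

end
end
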